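/- Let G be a cubic graph and let F be a 1-factor (perfect matching) of G. Then there exists a maximum 3-edge-colorable subgraph H of G such that E(F) ⊆ E(H). -/

import Mathlib

/-- A multigraph on vertex type `V` with edge type `E`: each edge has a pair of
endpoints (an element of `Sym2 V`), and there are no loops.  Multiple edges
(distinct edges with the same endpoints) are allowed. -/
structure Multigraph (V : Type) (E : Type) where
  ends : E → Sym2 V
  no_loops : ∀ e : E, ¬ (ends e).IsDiag

namespace Multigraph

variable {V E : Type}

/-- The degree of a vertex `v` inside the set `S` of edges:
the number of edges of `S` incident to `v`. -/
noncomputable def degreeIn (G : Multigraph V E) (S : Set E) (v : V) : ℕ :=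
  {e ∈ S | v ∈ G.ends e}.ncard

/-- The degree of a vertex: the number of edges incident to it. -/
noncomputable def degree (G : Multigraph V E) (v : V) : ℕ :=
  G.degreeIn Set.univ v

/-- A cubic graph: every vertex has degree exactly `3`. -/
def IsCubic (G : Multigraph V E) : Prop :=
  ∀ v : V, G.degree v = 3

/-- Two edges are adjacent if they share an endpoint. -/
def EdgeAdj (G : Multigraph V E) (e f : E) : Prop :=
  ∃ v : V, v ∈ G.ends e ∧ v ∈ G.ends f

/-- A set of edges is a matching if no two distinct edges of it share an endpoint. -/
def IsMatching (G : Multigraph V E) (M : Set E) : Prop :=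
  ∀ e ∈ M, ∀ f ∈ M, e ≠ f → ¬ G.EdgeAdj e f

/-- A perfect matching (`1`-factor): a matching covering every vertex. -/
def IsPerfectMatching (G : Multigraph V E) (F : Set E) : Prop :=
  G.IsMatching F ∧ ∀ v : V, ∃ e ∈ F, v ∈ G.ends e

/-- A `2`-factor: a spanning subgraph in which every vertex has degree exactly `2`. -/
def Is2Factor (G : Multigraph V E) (F : Set E) : Prop :=
  ∀ v : V, G.degreeIn F v = 2

/-- `c` is a proper edge coloring of the (spanning) subgraph with edge set `S`:
distinct adjacent edges of `S` get distinct colors. -/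
def IsProperColoring (G : Multigraph V E) (S : Set E) {k : ℕ} (c : E → Fin k) : Prop :=
  ∀ e ∈ S, ∀ f ∈ S, e ≠ f → G.EdgeAdj e f → c e ≠ c f

/-- The (spanning) subgraph with edge set `S` is `k`-edge-colorable. -/
def Colorable (G : Multigraph V E) (k : ℕ) (S : Set E) : Prop :=
  ∃ c : E → Fin k, G.IsProperColoring S c

/-- `H` is (the edge set of) a maximum `k`-edge-colorable subgraph of `G`. -/
def IsMaxColorable (G : Multigraph V E) (k : ℕ) (H : Set E) : Prop :=
  G.Colorable k H ∧ ∀ S : Set E, G.Colorable k S → S.ncard ≤ H.ncard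

/-- `ν_k(G)`: the number of edges of a maximum `k`-edge-colorable subgraph of `G`. -/
noncomputable def nu (G : Multigraph V E) (k : ℕ) : ℕ :=
  sSup {n : ℕ | ∃ S : Set E, G.Colorable k S ∧ S.ncard = n}

/-- The set of colors appearing (under the coloring `c` of the subgraph `H`)
on the edges of `H` incident to the vertex `w`. -/
def colorsAt (G : Multigraph V E) (H : Set E) {k : ℕ} (c : E → Fin k) (w : V) :
    Set (Fin k) :=
  {γ : Fin k | ∃ f ∈ H, w ∈ G.ends f ∧ c f = γ}

end Multigraph

/-- If `e ∉ H` is incident to `v` in a cubic graph, then some color is missing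
at `v` among the `H`-edges. -/
lemma missing_color {V E : Type} [Fintype E] (G : Multigraph V E) (hG : G.IsCubic)
    (H : Set E) (c : E → Fin 3) (e : E) (heH : e ∉ H) (v : V) (hv : v ∈ G.ends e) :
    ∃ β : Fin 3, ∀ f ∈ H, v ∈ G.ends f → c f ≠ β := by
  classical
  have hdeg : {f : E | v ∈ G.ends f}.ncard = 3 := by
    have h3 := hG v
    unfold Multigraph.degree Multigraph.degreeIn at h3
    simpa [Set.sep_univ] using h3
  have hsub : {f ∈ H | v ∈ G.ends f} ⊆ {f : E | v ∈ G.ends f} \ {e} := by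
    rintro g ⟨hgH, hgv⟩
    exact ⟨hgv, fun h => heH (h ▸ hgH)⟩
  have hT : {f ∈ H | v ∈ G.ends f}.ncard ≤ 2 := by
    have h1 : ({f : E | v ∈ G.ends f} \ {e}).ncard = 2 := by
      have he' : e ∈ {f : E | v ∈ G.ends f} := hv
      rw [Set.ncard_diff_singleton_of_mem he', hdeg]
    calc {f ∈ H | v ∈ G.ends f}.ncard ≤ ({f : E | v ∈ G.ends f} \ {e}).ncard :=
          Set.ncard_le_ncard hsub (Set.toFinite _)
      _ = 2 := h1
  have himg : (c '' {f ∈ H | v ∈ G.ends f}).ncard ≤ 2 :=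
    le_trans (Set.ncard_image_le (Set.toFinite _)) hT
  have hne : c '' {f ∈ H | v ∈ G.ends f} ≠ Set.univ := by
    intro h
    rw [h, Set.ncard_univ] at himg
    simp at himg
  obtain ⟨β, hβ⟩ := Set.ne_univ_iff_exists_notMem _ |>.mp hne
  refine ⟨β, fun f hf hfv hc => hβ ⟨f, ⟨hf, hfv⟩, hc⟩⟩

/-- Properness is preserved by restriction. -/
lemma proper_mono {V E : Type} (G : Multigraph V E) {S T : Set E} {k : ℕ} (c : E → Fin k)
    (hST : T ⊆ S) (hc : G.IsProperColoring S c) : G.IsProperColoring T c :=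
  fun g hg h hh hgh hadj => hc g (hST hg) h (hST hh) hgh hadj

/-- Inserting a new edge `e` colored `β`, where no `H`-edge adjacent to `e` is
colored `β`, preserves properness. -/
lemma proper_insert {V E : Type} [DecidableEq E] (G : Multigraph V E) (H : Set E) (c : E → Fin 3) (e : E)
    (β : Fin 3) (hc : G.IsProperColoring H c) (heH : e ∉ H)
    (hkey : ∀ h ∈ H, G.EdgeAdj e h → c h ≠ β) :
    G.IsProperColoring (insert e H) (Function.update c e β) := by
  have hupd : ∀ g ∈ H, Function.update c e β g = c g := fun g hg =>
    Function.update_of_ne (by rintro rfl; exact heH hg) _ _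
  intro g hg h hh hgh hadj
  rcases Set.mem_insert_iff.mp hg with rfl | hgH
  · rcases Set.mem_insert_iff.mp hh with rfl | hhH
    · exact absurd rfl hgh
    · rw [Function.update_self, hupd h hhH]
      exact fun h' => hkey h hhH hadj h'.symm
  · rcases Set.mem_insert_iff.mp hh with rfl | hhH
    · rw [Function.update_self, hupd g hgH]
      obtain ⟨w, hwg, hwh⟩ := hadj
      exact hkey g hgH ⟨w, hwh, hwg⟩
    · rw [hupd g hgH, hupd h hhH]
      exact hc g hgH h hhH hgh hadj

/-- Any 1-factor (perfect matching) of a cubic graph `G` can be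
extended to a maximum 3-edge-colorable subgraph of `G`. -/
theorem one_factor_extends_to_max_three_colorable
    {V E : Type} [Fintype V] [Fintype E] (G : Multigraph V E) (hG : G.IsCubic)
    (F : Set E) (hF : G.IsPerfectMatching F) :
    ∃ H : Set E, G.IsMaxColorable 3 H ∧ F ⊆ H := by
  classical
  set N := Fintype.card E with hN
  have hbound : ∀ S : Set E, S.ncard ≤ N := fun S => by
    simpa [Set.ncard_univ, hN] using Set.ncard_le_ncard (Set.subset_univ S) (Set.toFinite _)
  have hAne : (({n | ∃ S : Set E, G.Colorable 3 S ∧ (N+1) * S.ncard + (S ∩ F).ncard = n}) : Set ℕ).Nonempty :=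
    ⟨0, ∅, ⟨fun _ => 0, fun e he => absurd he (Set.notMem_empty e)⟩, by simp⟩
  have hAbdd : BddAbove {n | ∃ S : Set E, G.Colorable 3 S ∧ (N+1) * S.ncard + (S ∩ F).ncard = n} := by
    refine ⟨(N+1)*N + N, ?_⟩
    rintro n ⟨S, _, rfl⟩
    exact add_le_add (Nat.mul_le_mul le_rfl (hbound S)) (hbound _)
  obtain ⟨H, hHcol, hHval⟩ := Nat.sSup_mem hAne hAbdd
  have hmax : ∀ S : Set E, G.Colorable 3 S →
      (N+1) * S.ncard + (S ∩ F).ncard ≤ (N+1) * H.ncard + (H ∩ F).ncard := by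
    intro S hS
    rw [hHval]
    exact le_csSup hAbdd ⟨S, hS, rfl⟩
  have hFH : F ⊆ H := by
    intro e he
    by_contra heH
    obtain ⟨c, hc⟩ := hHcol
    obtain ⟨⟨u, v⟩, huv'⟩ := Quot.exists_rep (G.ends e)
    have huv : G.ends e = s(u, v) := huv'.symm
    have humem : u ∈ G.ends e := by rw [huv]; exact Sym2.mem_mk_left _ _
    have hvmem : v ∈ G.ends e := by rw [huv]; exact Sym2.mem_mk_right _ _
    obtain ⟨β, hβ⟩ := missing_color G hG H c e heH v hvmem
    by_cases hex : ∃ f ∈ H, u ∈ G.ends f ∧ c f = β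
    · -- exchange the unique β-edge at u for e
      obtain ⟨f, hfH, hfu, hfβ⟩ := hex
      have hfe : f ≠ e := fun h => heH (h ▸ hfH)
      have hfF : f ∉ F := fun hfF => hF.1 e he f hfF hfe.symm ⟨u, humem, hfu⟩
      set H' : Set E := insert e (H \ {f}) with hH'
      have hkey : ∀ h ∈ H \ ({f} : Set E), G.EdgeAdj e h → c h ≠ β := by
        intro h hh hadj hchβ
        obtain ⟨w, hwe, hwh⟩ := hadj
        rw [huv, Sym2.mem_iff] at hwe
        rcases hwe with rfl | rfl
        · rcases eq_or_ne h f with rfl | hhf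
          · exact hh.2 rfl
          · exact hc h hh.1 f hfH hhf ⟨w, hwh, hfu⟩ (hchβ.trans hfβ.symm)
        · exact hβ h hh.1 hwh hchβ
      have hprop : G.IsProperColoring H' (Function.update c e β) :=
        proper_insert G (H \ {f}) c e β
          (proper_mono G c Set.diff_subset hc) (fun h => heH h.1) hkey
      have hcard : H'.ncard = H.ncard := by
        have h1 : e ∉ H \ ({f} : Set E) := fun h => heH h.1
        have h2 : H'.ncard = (H \ {f}).ncard + 1 :=
          Set.ncard_insert_of_notMem h1 (Set.toFinite _)
        have h3 : (H \ ({f} : Set E)).ncard = H.ncard - 1 :=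
          Set.ncard_diff_singleton_of_mem hfH
        have h4 : 0 < H.ncard := (Set.ncard_pos (Set.toFinite _)).mpr ⟨f, hfH⟩
        omega
      have hint : H' ∩ F = insert e (H ∩ F) := by
        ext g
        simp only [hH', Set.mem_inter_iff, Set.mem_insert_iff, Set.mem_diff,
          Set.mem_singleton_iff]
        constructor
        · rintro ⟨rfl | ⟨hgH, _⟩, hgF⟩
          · exact Or.inl rfl
          · exact Or.inr ⟨hgH, hgF⟩
        · rintro (rfl | ⟨hgH, hgF⟩)
          · exact ⟨Or.inl rfl, he⟩
          · exact ⟨Or.inr ⟨hgH, fun h => hfF (h ▸ hgF)⟩, hgF⟩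
      have hintcard : (H' ∩ F).ncard = (H ∩ F).ncard + 1 := by
        rw [hint]
        exact Set.ncard_insert_of_notMem (fun h => heH h.1) (Set.toFinite _)
      have hle := hmax H' ⟨Function.update c e β, hprop⟩
      rw [hcard, hintcard] at hle
      linarith
    · -- no β-edge at u: just add e colored β
      push_neg at hex
      set H' : Set E := insert e H with hH'
      have hkey : ∀ h ∈ H, G.EdgeAdj e h → c h ≠ β := by
        intro h hh hadj hchβ
        obtain ⟨w, hwe, hwh⟩ := hadj
        rw [huv, Sym2.mem_iff] at hwe
        rcases hwe with rfl | rfl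
        · exact hex h hh hwh hchβ
        · exact hβ h hh hwh hchβ
      have hprop : G.IsProperColoring H' (Function.update c e β) :=
        proper_insert G H c e β hc heH hkey
      have hcard : H'.ncard = H.ncard + 1 :=
        Set.ncard_insert_of_notMem heH (Set.toFinite _)
      have hle := hmax H' ⟨Function.update c e β, hprop⟩
      rw [hcard] at hle
      have h1 := hbound (H ∩ F)
      have h2 : (N+1) * (H.ncard + 1) = (N+1) * H.ncard + (N+1) := by ring
      rw [h2] at hle
      linarith
  refine ⟨H, ⟨hHcol, ?_⟩, hFH⟩
  intro S hS
  by_contra hlt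
  push_neg at hlt
  have hle := hmax S hS
  have h1 : (N+1) * (H.ncard + 1) ≤ (N+1) * S.ncard := Nat.mul_le_mul le_rfl hlt
  have h2 : (N+1) * (H.ncard + 1) = (N+1) * H.ncard + (N+1) := by ring
  have h3 := hbound (H ∩ F)
  linarith
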